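/- For all f, g, h ∈ ℝⁿ, the vector vᵢ = (1/(2n)) ∑_{j=1}^n (gᵢ − gⱼ)(fᵢhⱼ + fⱼhᵢ) satisfies ‖v‖₂ ≤ ‖f‖_∞ ‖h‖_∞ ‖g − E g‖₂, where E g is the constant vector with entries the mean of g and ‖·‖₂ is the Euclidean norm. -/

import Mathlib

open Finset

/-- The symmetric matrix `Θ_x`: off-diagonal entries `(xᵢ+xⱼ)/(2n)`, diagonal chosen
so that every row sums to zero. -/
noncomputable def Theta (n : ℕ) (x : Fin n → ℝ) : Matrix (Fin n) (Fin n) ℝ :=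
  fun i j =>
    if i = j then -(∑ k ∈ Finset.univ.erase i, (x i + x k) / (2 * n))
    else (x i + x j) / (2 * n)

/-- `I_x = Iₙ + Θ_x`. -/
noncomputable def Imat (n : ℕ) (x : Fin n → ℝ) : Matrix (Fin n) (Fin n) ℝ :=
  1 + Theta n x

/-- `E f`: the constant vector whose entries all equal the mean of `f`. -/
noncomputable def meanVec (n : ℕ) (f : Fin n → ℝ) : Fin n → ℝ :=
  fun _ => (∑ i, f i) / n

/-- The sup norm `‖x‖_∞`. -/
noncomputable def linf (n : ℕ) (x : Fin n → ℝ) : ℝ :=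
  sSup (Set.range fun i => |x i|)

/-- The Ky Fan `k`-norm: the sum of the `k` largest absolute values of the entries,
i.e. the maximum of `∑_{i ∈ S} |xᵢ|` over subsets `S` of cardinality `k`. -/
noncomputable def kyFan (n k : ℕ) (x : Fin n → ℝ) : ℝ :=
  sSup ((fun S : Finset (Fin n) => ∑ i ∈ S, |x i|) '' {S | S.card = k})

/-- The dual Ky Fan `k`-norm: `max(‖x‖_∞, ‖x‖₁ / k)`. -/
noncomputable def kyFanDual (n k : ℕ) (x : Fin n → ℝ) : ℝ :=
  max (linf n x) ((∑ i, |x i|) / k)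

/-- A symmetric norm on `ℝⁿ`: a norm invariant under coordinate permutations
and sign changes. -/
structure IsSymmNorm (n : ℕ) (N : (Fin n → ℝ) → ℝ) : Prop where
  add_le : ∀ x y, N (x + y) ≤ N x + N y
  smul : ∀ (c : ℝ) (x), N (c • x) = |c| * N x
  pos : ∀ x, x ≠ 0 → 0 < N x
  perm : ∀ (σ : Equiv.Perm (Fin n)) (x), N (x ∘ σ) = N x
  sign : ∀ (ε x : Fin n → ℝ), (∀ i, ε i = 1 ∨ ε i = -1) → N (ε * x) = N x

/-- Proposition 3.6 (explicit form): the ℓ²-bimodule inequality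
`‖∂*(f (∂g) h)‖₂ ≤ ‖f‖_∞ ‖h‖_∞ ‖g − E g‖₂`. -/
theorem stmt_18 (n : ℕ) (hn : 0 < n) (f g h : Fin n → ℝ) :
    Real.sqrt (∑ i, ((1 / (2 * n)) * ∑ j, (g i - g j) * (f i * h j + f j * h i)) ^ 2)
      ≤ linf n f * linf n h * Real.sqrt (∑ i, (g i - (∑ j, g j) / n) ^ 2) := by
  have hn' : (0:ℝ) < n := by exact_mod_cast hn
  have hFb : ∀ i, |f i| ≤ linf n f := fun i =>
    le_csSup (Set.Finite.bddAbove (Set.finite_range _)) ⟨i, rfl⟩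
  have hHb : ∀ i, |h i| ≤ linf n h := fun i =>
    le_csSup (Set.Finite.bddAbove (Set.finite_range _)) ⟨i, rfl⟩
  set F := linf n f with hFdef
  set H := linf n h with hHdef
  have i0 : Fin n := ⟨0, hn⟩
  have hF0 : 0 ≤ F := (abs_nonneg _).trans (hFb i0)
  have hH0 : 0 ≤ H := (abs_nonneg _).trans (hHb i0)
  set v : Fin n → ℝ :=
    fun i => (1 / (2 * (n:ℝ))) * ∑ j, (g i - g j) * (f i * h j + f j * h i) with hv
  set a : Fin n → Fin n → ℝ :=
    fun i j => (g i - g j) * (f i * h j + f j * h i) with ha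
  set S := Real.sqrt (∑ i, v i ^ 2) with hS
  set G := Real.sqrt (∑ i, (g i - (∑ j, g j) / n) ^ 2) with hG
  have hS0 : 0 ≤ S := Real.sqrt_nonneg _
  have hG0 : 0 ≤ G := Real.sqrt_nonneg _
  have hSsq : S ^ 2 = ∑ i, v i ^ 2 := Real.sq_sqrt (by positivity)
  have hGsq : G ^ 2 = ∑ i, (g i - (∑ j, g j) / n) ^ 2 := Real.sq_sqrt (by positivity)
  -- antisymmetry step
  have hanti : ∀ i j, a j i = - a i j := by intro i j; simp only [ha]; ring
  have hswap : (∑ i, ∑ j, a i j * v j) = - ∑ i, ∑ j, a i j * v i := by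
    rw [Finset.sum_comm, ← Finset.sum_neg_distrib]
    refine Finset.sum_congr rfl fun i _ => ?_
    rw [← Finset.sum_neg_distrib]
    exact Finset.sum_congr rfl fun j _ => by rw [hanti]; ring
  have hsym : (∑ i, ∑ j, a i j * (v i - v j)) = 2 * ∑ i, ∑ j, a i j * v i := by
    have : (∑ i, ∑ j, a i j * (v i - v j))
        = (∑ i, ∑ j, a i j * v i) - (∑ i, ∑ j, a i j * v j) := by
      rw [← Finset.sum_sub_distrib]
      refine Finset.sum_congr rfl fun i _ => ?_
      rw [← Finset.sum_sub_distrib]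
      exact Finset.sum_congr rfl fun j _ => by ring
    rw [this, hswap]; ring
  -- pointwise bound and Cauchy-Schwarz
  have hCS : (∑ i, ∑ j, |g i - g j| * |v i - v j|)
      ≤ Real.sqrt (∑ i, ∑ j, (g i - g j) ^ 2) * Real.sqrt (∑ i, ∑ j, (v i - v j) ^ 2) := by
    have := Real.sum_mul_le_sqrt_mul_sqrt (Finset.univ : Finset (Fin n × Fin n))
      (fun p => |g p.1 - g p.2|) (fun p => |v p.1 - v p.2|)
    simpa only [Fintype.sum_prod_type, sq_abs] using this
  have hbound : (∑ i, ∑ j, a i j * (v i - v j))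
      ≤ 2 * F * H * ∑ i, ∑ j, |g i - g j| * |v i - v j| := by
    rw [Finset.mul_sum]
    refine Finset.sum_le_sum fun i _ => ?_
    rw [Finset.mul_sum]
    refine Finset.sum_le_sum fun j _ => ?_
    have h1 : a i j * (v i - v j) ≤ |g i - g j| * |f i * h j + f j * h i| * |v i - v j| := by
      calc a i j * (v i - v j) ≤ |a i j * (v i - v j)| := le_abs_self _
        _ = |g i - g j| * |f i * h j + f j * h i| * |v i - v j| := by
            rw [abs_mul, abs_mul]
    have h2 : |f i * h j + f j * h i| ≤ 2 * F * H := by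
      calc |f i * h j + f j * h i| ≤ |f i * h j| + |f j * h i| := abs_add_le _ _
        _ = |f i| * |h j| + |f j| * |h i| := by rw [abs_mul, abs_mul]
        _ ≤ F * H + F * H := by
            gcongr <;> first | exact hFb _ | exact hHb _ | exact abs_nonneg _
        _ = 2 * F * H := by ring
    calc a i j * (v i - v j) ≤ |g i - g j| * |f i * h j + f j * h i| * |v i - v j| := h1
      _ ≤ |g i - g j| * (2 * F * H) * |v i - v j| := by
          gcongr
      _ = 2 * F * H * (|g i - g j| * |v i - v j|) := by ring
  -- sum-of-squares identities
  have hnne : (n:ℝ) ≠ 0 := hn'.ne'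
  have expand1 : ∀ (x : Fin n → ℝ) (i : Fin n), (∑ j, (x i - x j) ^ 2)
      = n * x i ^ 2 - x i * (∑ j, x j) * 2 + (∑ j, x j ^ 2) := by
    intro x i
    have e : (∑ j, (x i - x j) ^ 2)
        = (∑ _j : Fin n, x i ^ 2) - (∑ j, x i * x j) * 2 + (∑ j, x j ^ 2) := by
      rw [Finset.sum_mul, ← Finset.sum_sub_distrib, ← Finset.sum_add_distrib]
      exact Finset.sum_congr rfl fun j _ => by ring
    rw [e, Finset.sum_const, Finset.card_univ, Fintype.card_fin, nsmul_eq_mul,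
      ← Finset.mul_sum]
  have expand2 : ∀ x : Fin n → ℝ, (∑ i, ∑ j, (x i - x j) ^ 2)
      = 2 * n * (∑ i, x i ^ 2) - 2 * (∑ i, x i) ^ 2 := by
    intro x
    rw [Finset.sum_congr rfl fun i _ => expand1 x i]
    rw [Finset.sum_add_distrib, Finset.sum_sub_distrib, ← Finset.mul_sum,
      Finset.sum_const, Finset.card_univ, Fintype.card_fin, nsmul_eq_mul]
    have e : (∑ i, x i * (∑ j, x j) * 2) = (∑ i, x i) * (∑ j, x j) * 2 := by
      rw [← Finset.sum_mul, ← Finset.sum_mul]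
    rw [e]; ring
  have e2 : (∑ i, (g i - (∑ j, g j) / n) ^ 2)
      = (∑ i, g i ^ 2) - (∑ i, g i) ^ 2 / n := by
    have e : (∑ i, (g i - (∑ j, g j) / n) ^ 2)
        = (∑ i, g i ^ 2) - (∑ i, g i * ((∑ j, g j) / n)) * 2
          + (∑ _i : Fin n, ((∑ j, g j) / n) ^ 2) := by
      rw [Finset.sum_mul, ← Finset.sum_sub_distrib, ← Finset.sum_add_distrib]
      exact Finset.sum_congr rfl fun i _ => by ring
    rw [e, Finset.sum_const, Finset.card_univ, Fintype.card_fin, nsmul_eq_mul,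
      ← Finset.sum_mul]
    field_simp
    ring
  have hgsum : (∑ i, ∑ j, (g i - g j) ^ 2) = 2 * n * G ^ 2 := by
    rw [hGsq, expand2 g, e2]
    field_simp
  have hvsum : (∑ i, ∑ j, (v i - v j) ^ 2) ≤ 2 * n * S ^ 2 := by
    rw [hSsq, expand2 v]
    nlinarith [sq_nonneg (∑ i, v i)]
  -- combine
  have key : (∑ i, v i ^ 2) ≤ F * H * G * S := by
    have step1 : (∑ i, v i ^ 2) = (1 / (4 * (n:ℝ))) * ∑ i, ∑ j, a i j * (v i - v j) := by
      rw [hsym]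
      have : ∀ i : Fin n, v i ^ 2 = (1 / (2 * (n:ℝ))) * ∑ j, a i j * v i := by
        intro i
        rw [← Finset.sum_mul, hv]
        simp only [ha]
        ring
      rw [Finset.sum_congr rfl fun i _ => this i, ← Finset.mul_sum]
      field_simp
      ring
    rw [step1]
    have hsqG : Real.sqrt (∑ i, ∑ j, (g i - g j) ^ 2) = Real.sqrt (2 * n) * G := by
      rw [hgsum, Real.sqrt_mul (by positivity), Real.sqrt_sq hG0]
    have hsqV : Real.sqrt (∑ i, ∑ j, (v i - v j) ^ 2) ≤ Real.sqrt (2 * n) * S := by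
      calc Real.sqrt (∑ i, ∑ j, (v i - v j) ^ 2) ≤ Real.sqrt (2 * n * S ^ 2) :=
            Real.sqrt_le_sqrt hvsum
        _ = Real.sqrt (2 * n) * S := by
            rw [Real.sqrt_mul (by positivity), Real.sqrt_sq hS0]
    have hchain : (∑ i, ∑ j, a i j * (v i - v j))
        ≤ 2 * F * H * (Real.sqrt (2 * n) * G * (Real.sqrt (2 * n) * S)) := by
      calc (∑ i, ∑ j, a i j * (v i - v j))
          ≤ 2 * F * H * ∑ i, ∑ j, |g i - g j| * |v i - v j| := hbound
        _ ≤ 2 * F * H * (Real.sqrt (∑ i, ∑ j, (g i - g j) ^ 2)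
              * Real.sqrt (∑ i, ∑ j, (v i - v j) ^ 2)) := by
            have h2FH : (0:ℝ) ≤ 2 * F * H := by positivity
            exact mul_le_mul_of_nonneg_left hCS h2FH
        _ ≤ 2 * F * H * (Real.sqrt (2 * n) * G * (Real.sqrt (2 * n) * S)) := by
            rw [hsqG]
            have h2FH : (0:ℝ) ≤ 2 * F * H := by positivity
            exact mul_le_mul_of_nonneg_left
              (mul_le_mul_of_nonneg_left hsqV (by positivity)) h2FH
    have hsq2n : Real.sqrt (2 * n) * Real.sqrt (2 * n) = 2 * n :=
      Real.mul_self_sqrt (by positivity)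
    calc (1 / (4 * (n:ℝ))) * ∑ i, ∑ j, a i j * (v i - v j)
        ≤ (1 / (4 * (n:ℝ))) * (2 * F * H * (Real.sqrt (2 * n) * G * (Real.sqrt (2 * n) * S))) := by
          exact mul_le_mul_of_nonneg_left hchain (by positivity)
      _ = F * H * G * S := by
          have e : Real.sqrt (2 * n) * G * (Real.sqrt (2 * n) * S)
              = (2 * n) * (G * S) := by linear_combination (G * S) * hsq2n
          rw [e]
          have e' : (1 / (4 * (n:ℝ))) * (2 * F * H * (2 * (n:ℝ) * (G * S)))
              = ((n:ℝ) / n) * (F * H * G * S) := by ring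
          rw [e', div_self hnne, one_mul]
  -- finish
  rcases eq_or_lt_of_le hS0 with h0 | h0
  · rw [← h0]
    exact mul_nonneg (mul_nonneg hF0 hH0) hG0
  · have h1 : S * S ≤ F * H * G * S := by nlinarith [key, hSsq]
    exact le_of_mul_le_mul_right h1 h0
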